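/- Let R be a commutative ring, s ∈ R, and let S = R[X]/(X² - sX). Suppose v = e₁ + s·w ∈ Rᵈ is a unimodular row over R (where e₁ is the first standard basis vector and w ∈ Rᵈ). Then the row u(X) = e₁ + X·w is a unimodular row over S. -/

import Mathlib

open Matrix Polynomial

/-- A row `v ∈ Rⁿ` is unimodular if `∑ vᵢ wᵢ = 1` for some row `w`. -/
def IsUnimodular {R : Type*} [CommRing R] {n : ℕ} (v : Fin n → R) : Prop :=
  ∃ w : Fin n → R, ∑ i, v i * w i = 1

/-- The first standard basis row `e₁ = (1,0,…,0)`. -/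
def e1 (R : Type*) [CommRing R] (n : ℕ) : Fin n → R :=
  fun i => if (i : ℕ) = 0 then 1 else 0

/-- Unimodular rows relative to an ideal `I`: unimodular and congruent to `e₁` mod `I`. -/
def IsRelUnimodular {R : Type*} [CommRing R] {n : ℕ} (I : Ideal R) (v : Fin n → R) : Prop :=
  IsUnimodular v ∧ ∀ i, v i - e1 R n i ∈ I

/-- The elementary group `Eₙ(R)`, as a subgroup of `GLₙ(R)` generated by the
elementary matrices `1 + x Eᵢⱼ`, `i ≠ j`. -/
def ElementaryGroup (n : ℕ) (R : Type*) [CommRing R] :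
    Subgroup (Matrix.GeneralLinearGroup (Fin n) R) :=
  Subgroup.closure {g | ∃ i j : Fin n, i ≠ j ∧ ∃ x : R,
    (g : Matrix (Fin n) (Fin n) R) = 1 + Matrix.single i j x}

/-- The relative elementary group `Eₙ(R, I)`: the normal closure in `Eₙ(R)` of the
subgroup generated by elementary matrices with off-diagonal entry in `I`. -/
def RelElementaryGroup (n : ℕ) (R : Type*) [CommRing R] (I : Ideal R) :
    Subgroup (Matrix.GeneralLinearGroup (Fin n) R) :=
  Subgroup.closure {g | ∃ ε ∈ ElementaryGroup n R, ∃ e : Matrix.GeneralLinearGroup (Fin n) R,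
    (∃ i j : Fin n, i ≠ j ∧ ∃ x ∈ I,
      (e : Matrix (Fin n) (Fin n) R) = 1 + Matrix.single i j x) ∧ g = ε * e * ε⁻¹}

/-- The standard symplectic form `ψ_m` (block diagonal with blocks `[[0,1],[-1,0]]`),
written down entrywise for an `n × n` matrix (with `n = 2m`). -/
def psiMat (R : Type*) [CommRing R] (n : ℕ) : Matrix (Fin n) (Fin n) R :=
  Matrix.of fun i j =>
    if (i : ℕ) % 2 = 0 ∧ (j : ℕ) = (i : ℕ) + 1 then 1
    else if (i : ℕ) % 2 = 1 ∧ (j : ℕ) + 1 = (i : ℕ) then -1 else 0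

/-- A matrix is symplectic if `αᵀ ψ α = ψ`. -/
def IsSymplectic {R : Type*} [CommRing R] {n : ℕ} (A : Matrix (Fin n) (Fin n) R) : Prop :=
  A.transpose * psiMat R n * A = psiMat R n

/-- The permutation `σ` with `σ(2i) = 2i-1`, `σ(2i-1) = 2i` (1-indexed), written
0-indexed on `Fin n`: it swaps `2k ↔ 2k+1`. -/
def sigmaF (n : ℕ) (i : Fin n) : Fin n :=
  if h : (if (i : ℕ) % 2 = 0 then (i : ℕ) + 1 else (i : ℕ) - 1) < n
  then ⟨_, h⟩ else i

/-- The elementary symplectic matrix `se_{ij}(z)`. -/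
def seMat (n : ℕ) (R : Type*) [CommRing R] (i j : Fin n) (z : R) :
    Matrix (Fin n) (Fin n) R :=
  if i = sigmaF n j then 1 + Matrix.single i j z
  else 1 + Matrix.single i j z -
    Matrix.single (sigmaF n j) (sigmaF n i) ((-1 : R) ^ ((i : ℕ) + (j : ℕ)) * z)

/-- The elementary symplectic group `ESpₙ(R)` generated by the `se_{ij}(z)`. -/
def ESpGroup (n : ℕ) (R : Type*) [CommRing R] :
    Subgroup (Matrix.GeneralLinearGroup (Fin n) R) :=
  Subgroup.closure {g | ∃ i j : Fin n, i ≠ j ∧ ∃ z : R,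
    (g : Matrix (Fin n) (Fin n) R) = seMat n R i j z}

/-- `I_k ⊕ α ⊕ I` : the `n × n` matrix with `α` placed in rows/columns `k, …, k+d-1`
and `1`'s on the rest of the diagonal.  `idPad 0 n α` is the stabilization `α ⊥ I` and
`idPad k (k+d) α` is `I_k ⊥ α`. -/
def idPad {R : Type*} [CommRing R] {d : ℕ} (k n : ℕ) (α : Matrix (Fin d) (Fin d) R) :
    Matrix (Fin n) (Fin n) R :=
  Matrix.of fun i j =>
    if h : k ≤ (i : ℕ) ∧ k ≤ (j : ℕ) ∧ (i : ℕ) - k < d ∧ (j : ℕ) - k < d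
    then α ⟨(i : ℕ) - k, h.2.2.1⟩ ⟨(j : ℕ) - k, h.2.2.2⟩
    else if (i : ℕ) = (j : ℕ) then 1 else 0

/-- A square matrix of size `d` lies in the stable elementary group `E(R)` if some
stabilization `α ⊥ I_m` is a product of elementary matrices. -/
def InStableElementary {R : Type*} [CommRing R] {d : ℕ}
    (α : Matrix (Fin d) (Fin d) R) : Prop :=
  ∃ m : ℕ, ∃ g ∈ ElementaryGroup (d + m) R,
    (g : Matrix (Fin (d + m)) (Fin (d + m)) R) = idPad 0 (d + m) α

/-- A Noetherian local ring is regular if its maximal ideal is generated by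
(Krull dimension)-many elements. -/
def IsRegularLocal (A : Type*) [CommRing A] [IsLocalRing A] : Prop :=
  IsNoetherianRing A ∧ ∃ s : Finset A, Ideal.span (s : Set A) = IsLocalRing.maximalIdeal A ∧
    (s.card : WithBot (WithTop ℕ)) = ringKrullDim A

/-- `J` defines the singular locus of `R`: a prime `P` is a regular (smooth) point
iff `J ⊄ P`. -/
def DefinesSingularLocus {R : Type*} [CommRing R] (J : Ideal R) : Prop :=
  ∀ (P : Ideal R) (hP : P.IsPrime),
    haveI := hP
    (¬ J ≤ P ↔ IsRegularLocal (Localization.AtPrime P))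

theorem stmt_0 (R : Type*) [CommRing R] (d : ℕ) (s : R) (w : Fin d → R)
    (hv : IsUnimodular (fun i => e1 R d i + s * w i)) :
    IsUnimodular (fun i =>
      (Ideal.Quotient.mk (Ideal.span {(X : R[X]) ^ 2 - C s * X}))
        (C (e1 R d i) + X * C (w i))) := by
  obtain ⟨b, hb⟩ := hv
  rcases d with _ | n
  · -- trivial ring: hb : 0 = 1
    simp at hb
    refine ⟨fun _ => 0, ?_⟩
    have h1 : (1 : R[X] ⧸ Ideal.span {(X : R[X]) ^ 2 - C s * X})
        = Ideal.Quotient.mk _ (C (1 : R)) := by simp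
    rw [h1, ← hb]
    simp
  set A : R := ∑ j, w j * b j with hA
  have hsum : ∀ f : Fin (n+1) → R, ∑ i, e1 R (n+1) i * f i = f 0 := by
    intro f
    rw [Finset.sum_eq_single 0]
    · simp [e1]
    · intro i _ hi
      have hi' : (i : ℕ) ≠ 0 := fun h => hi (Fin.ext (by simpa using h))
      simp [e1, hi']
    · simp
  have hb0 : b 0 + s * A = 1 := by
    have := hb
    simp only [add_mul, Finset.sum_add_distrib] at this
    rw [hsum] at this
    rw [← this, hA]
    rw [Finset.mul_sum]
    ring_nf
  set P : R[X] := ∑ i, (C (e1 R (n+1) i) + X * C (w i)) * C (b i) with hPdef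
  have hP : P = C (b 0) + X * C A := by
    rw [hPdef]
    have : ∀ i : Fin (n+1), (C (e1 R (n+1) i) + X * C (w i)) * C (b i)
        = C (e1 R (n+1) i * b i) + X * C (w i * b i) := by
      intro i; simp only [C_mul]; ring
    rw [Finset.sum_congr rfl fun i _ => this i]
    rw [Finset.sum_add_distrib, ← map_sum, ← Finset.mul_sum, ← map_sum, hsum]
  have ha : ∑ i, (C (e1 R (n+1) i) + X * C (w i)) * C (e1 R (n+1) i)
      = 1 + X * C (w 0) := by
    have : ∀ i : Fin (n+1), (C (e1 R (n+1) i) + X * C (w i)) * C (e1 R (n+1) i)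
        = C (e1 R (n+1) i * e1 R (n+1) i) + X * C (w i * e1 R (n+1) i) := by
      intro i; simp only [C_mul]; ring
    rw [Finset.sum_congr rfl fun i _ => this i, Finset.sum_add_distrib,
      ← map_sum, ← Finset.mul_sum, ← map_sum]
    have h1 : ∑ i, e1 R (n+1) i * e1 R (n+1) i = 1 := by
      have := hsum (e1 R (n+1)); rw [this]; simp [e1]
    have h2 : ∑ i, w i * e1 R (n+1) i = w 0 := by
      have : ∀ i : Fin (n+1), w i * e1 R (n+1) i = e1 R (n+1) i * w i := fun i => mul_comm _ _
      rw [Finset.sum_congr rfl fun i _ => this i, hsum]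
    rw [h1, h2]; simp
  refine ⟨fun i => (Ideal.Quotient.mk _) (C (e1 R (n+1) i) * (1 - P) + C (b i)), ?_⟩
  rw [show (1 : R[X] ⧸ Ideal.span {(X : R[X]) ^ 2 - C s * X}) =
    (Ideal.Quotient.mk _) 1 from rfl]
  simp only [← _root_.map_mul, ← map_sum]
  rw [Ideal.Quotient.eq]
  rw [Ideal.mem_span_singleton]
  refine ⟨-C (A * w 0), ?_⟩
  have hexp : ∑ i, (C (e1 R (n+1) i) + X * C (w i)) * (C (e1 R (n+1) i) * (1 - P) + C (b i))
      = (∑ i, (C (e1 R (n+1) i) + X * C (w i)) * C (e1 R (n+1) i)) * (1 - P) + P := by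
    rw [Finset.sum_mul, hPdef]
    rw [← Finset.sum_add_distrib]
    refine Finset.sum_congr rfl fun i _ => by ring
  rw [hexp, ha, hP]
  have hc : C (b 0) = 1 - C s * C A := by
    rw [← C_mul, ← C_1, ← C_sub]
    exact congrArg C (by linear_combination hb0)
  rw [hc]
  simp only [C_mul]
  ring
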